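/- For every n ≥ 2 and 1 ≤ a ≤ n−1, define ι' : V_a^n → V_1^n ⊗ V_{a−1}^n by ι'(v) = (pairing_{V_{n−a}^n} ⊗ Id_{V_1^n} ⊗ Id_{V_{a−1}^n})(d_{a,n}(v) ⊗ v_out^n_{n−a,1,a−1}) and π' : V_1^n ⊗ V_{a−1}^n → V_a^n by π' = (v_in^n_{1,a−1,n−a} ⊗ d_{a,n}^{-1}) ∘ (Id_{V_1^n} ⊗ Id_{V_{a−1}^n} ⊗ copairing_{V_{n−a}^n}). Then the composite π' ∘ ι' is a nonzero 𝔸-scalar multiple of the identity of V_a^n. -/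

import Mathlib

noncomputable section

open scoped TensorProduct

set_option maxHeartbeats 1000000
set_option synthInstance.maxHeartbeats 400000

/-- The ground field `𝔸 = ℚ(q)`. -/
abbrev A : Type := RatFunc ℚ

/-- The element `q ∈ 𝔸`. -/
def qq : A := RatFunc.X

/-- The set of `a`-element subsets of `{0, 1, …, n-1}` (a model for the
`a`-element subsets of `{1, …, n}`), the basis of `V_a^n`. -/
abbrev BS (n a : ℕ) : Type := {s : Finset ℕ // s ⊆ Finset.range n ∧ s.card = a}

instance BS.fintype (n a : ℕ) : Fintype (BS n a) :=
  Fintype.subtype ((Finset.range n).powerset.filter fun s => s.card = a) (by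
    intro s
    simp [Finset.mem_powerset, Finset.mem_filter])

/-- The fundamental representation `V_a^n`, as the `𝔸`-vector space with basis the
`a`-element subsets of an `n`-element set. -/
abbrev V (n a : ℕ) : Type := BS n a → A

/-- `i₋₁ : V_{a-1}^{n-1} → V_a^n` (here with indices shifted:
`iminus n a : V_a^n → V_{a+1}^{n+1}`), the inclusion of the summand of subsets containing
the new top element `n`. -/
def iminus (n a : ℕ) : V n a →ₗ[A] V (n+1) (a+1) where
  toFun f s := if h : n ∈ s.1 then
      f ⟨s.1.erase n, by
        constructor
        · intro x hx
          have hx' := Finset.mem_erase.mp hx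
          have hx2 := s.2.1 hx'.2
          simp only [Finset.mem_range] at hx2 ⊢
          omega
        · rw [Finset.card_erase_of_mem h, s.2.2]; omega⟩
    else 0
  map_add' f g := by
    funext s
    simp only [Pi.add_apply]
    by_cases h : n ∈ s.1 <;> simp [h]
  map_smul' c f := by
    funext s
    simp only [Pi.smul_apply, smul_eq_mul, RingHom.id_apply]
    by_cases h : n ∈ s.1 <;> simp [h]

/-- `i₀ : V_a^{n-1} → V_a^n` (as `izero n a : V_a^n → V_a^{n+1}`), the inclusion of the
summand of subsets not containing the new top element. -/
def izero (n a : ℕ) : V n a →ₗ[A] V (n+1) a where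
  toFun f s := if h : n ∈ s.1 then 0 else
      f ⟨s.1, by
        refine ⟨fun x hx => ?_, s.2.2⟩
        have hx2 := s.2.1 hx
        simp only [Finset.mem_range] at hx2 ⊢
        rcases Nat.lt_succ_iff_lt_or_eq.mp hx2 with h' | h'
        · exact h'
        · exact absurd (h' ▸ hx) h⟩
  map_add' f g := by
    funext s
    simp only [Pi.add_apply]
    by_cases h : n ∈ s.1 <;> simp [h]
  map_smul' c f := by
    funext s
    simp only [Pi.smul_apply, smul_eq_mul, RingHom.id_apply]
    by_cases h : n ∈ s.1 <;> simp [h]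

/-- `p₋₁ : V_a^n → V_{a-1}^{n-1}` (as `pminus n a : V_{a+1}^{n+1} → V_a^n`), the projection
onto the summand of subsets containing the top element. -/
def pminus (n a : ℕ) : V (n+1) (a+1) →ₗ[A] V n a where
  toFun f t := f ⟨insert n t.1, by
    have hn : n ∉ t.1 := fun h => by
      have := t.2.1 h; simp [Finset.mem_range] at this
    constructor
    · intro x hx
      rcases Finset.mem_insert.mp hx with rfl | hx
      · simp
      · have := t.2.1 hx; simp only [Finset.mem_range] at this ⊢; omega
    · rw [Finset.card_insert_of_notMem hn, t.2.2]⟩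
  map_add' f g := rfl
  map_smul' c f := rfl

/-- `p₀ : V_a^n → V_a^{n-1}` (as `pzero n a : V_a^{n+1} → V_a^n`), the projection onto the
summand of subsets not containing the top element. -/
def pzero (n a : ℕ) : V (n+1) a →ₗ[A] V n a where
  toFun f t := f ⟨t.1, by
    refine ⟨fun x hx => ?_, t.2.2⟩
    have := t.2.1 hx; simp only [Finset.mem_range] at this ⊢; omega⟩
  map_add' f g := rfl
  map_smul' c f := rfl

/-- The diagonal operator on `V_a^n` acting by the scalar `x` on basis subsets containing `m`
and by `y` on those not containing `m`; for `m = n-1` this is `x • i₋₁ p₋₁ + y • i₀ p₀`. -/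
def diagOp (n a m : ℕ) (x y : A) : Module.End A (V n a) where
  toFun f s := (if m ∈ s.1 then x else y) * f s
  map_add' f g := by
    funext s
    simp only [Pi.add_apply]
    ring
  map_smul' c f := by
    funext s
    simp only [Pi.smul_apply, smul_eq_mul, RingHom.id_apply]
    ring

/-- The recursively defined action of the generator `X_i^+` on `V_a^n`
(`XpOp n a i`, where `i` is the literal subscript, `1 ≤ i ≤ n-1`). -/
def XpOp : (n a i : ℕ) → Module.End A (V n a)
  | 0, _, _ => 0
  | 1, _, _ => 0
  | _+2, 0, _ => 0
  | n+2, a+1, i =>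
    if a + 1 = n + 2 then 0
    else if i = n + 1 then
      (iminus (n+1) a) ∘ₗ (izero n a) ∘ₗ (pminus n a) ∘ₗ (pzero (n+1) (a+1))
    else
      (iminus (n+1) a) ∘ₗ (XpOp (n+1) a i) ∘ₗ (pminus (n+1) a)
      + (izero (n+1) (a+1)) ∘ₗ (XpOp (n+1) (a+1) i) ∘ₗ (pzero (n+1) (a+1))

/-- The recursively defined action of the generator `X_i^-` on `V_a^n`. -/
def XmOp : (n a i : ℕ) → Module.End A (V n a)
  | 0, _, _ => 0
  | 1, _, _ => 0
  | _+2, 0, _ => 0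
  | n+2, a+1, i =>
    if a + 1 = n + 2 then 0
    else if i = n + 1 then
      (izero (n+1) (a+1)) ∘ₗ (iminus n a) ∘ₗ (pzero n a) ∘ₗ (pminus (n+1) a)
    else
      (iminus (n+1) a) ∘ₗ (XmOp (n+1) a i) ∘ₗ (pminus (n+1) a)
      + (izero (n+1) (a+1)) ∘ₗ (XmOp (n+1) (a+1) i) ∘ₗ (pzero (n+1) (a+1))

/-- The recursively defined action of the generator `K_i` on `V_a^n`.  The middle factors
`diagOp … 1 q` and `diagOp … q⁻¹ 1` are the operators `i₋₁ p₋₁ + q i₀ p₀` and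
`q⁻¹ i₋₁ p₋₁ + i₀ p₀` of the recursion. -/
def KOp : (n a i : ℕ) → Module.End A (V n a)
  | 0, _, _ => 1
  | 1, _, _ => 1
  | _+2, 0, _ => 1
  | n+2, a+1, i =>
    if a + 1 = n + 2 then 1
    else if i = n + 1 then
      (iminus (n+1) a) ∘ₗ (diagOp (n+1) a n 1 qq) ∘ₗ (pminus (n+1) a)
      + (izero (n+1) (a+1)) ∘ₗ (diagOp (n+1) (a+1) n qq⁻¹ 1) ∘ₗ (pzero (n+1) (a+1))
    else
      (iminus (n+1) a) ∘ₗ (KOp (n+1) a i) ∘ₗ (pminus (n+1) a)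
      + (izero (n+1) (a+1)) ∘ₗ (KOp (n+1) (a+1) i) ∘ₗ (pzero (n+1) (a+1))

/-- The recursively defined action of `K_i⁻¹` on `V_a^n` (the inverse of `KOp`),
given by the same recursion with `q` and `q⁻¹` interchanged. -/
def KinvOp : (n a i : ℕ) → Module.End A (V n a)
  | 0, _, _ => 1
  | 1, _, _ => 1
  | _+2, 0, _ => 1
  | n+2, a+1, i =>
    if a + 1 = n + 2 then 1
    else if i = n + 1 then
      (iminus (n+1) a) ∘ₗ (diagOp (n+1) a n 1 qq⁻¹) ∘ₗ (pminus (n+1) a)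
      + (izero (n+1) (a+1)) ∘ₗ (diagOp (n+1) (a+1) n qq 1) ∘ₗ (pzero (n+1) (a+1))
    else
      (iminus (n+1) a) ∘ₗ (KinvOp (n+1) a i) ∘ₗ (pminus (n+1) a)
      + (izero (n+1) (a+1)) ∘ₗ (KinvOp (n+1) (a+1) i) ∘ₗ (pzero (n+1) (a+1))
/-! ### The quantum group `U_q(sl_n)` by generators and relations.

We present the algebra with `m = n - 1` generators of each kind `K i, K i⁻¹, X i⁺, X i⁻`,
indexed by `i : Fin m` (so `i` corresponds to the subscript `i + 1 ∈ {1, …, n-1}`). -/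

/-- Generators of `U_q(sl_n)` (with `m = n-1`). -/
inductive UqGen (m : ℕ) : Type
  | K : Fin m → UqGen m
  | Kinv : Fin m → UqGen m
  | Xp : Fin m → UqGen m
  | Xm : Fin m → UqGen m

/-- The free `𝔸`-algebra on the generators. -/
abbrev FA (m : ℕ) : Type := FreeAlgebra A (UqGen m)

namespace FA
variable {m : ℕ}
def K (i : Fin m) : FA m := FreeAlgebra.ι A (UqGen.K i)
def Kinv (i : Fin m) : FA m := FreeAlgebra.ι A (UqGen.Kinv i)
def Xp (i : Fin m) : FA m := FreeAlgebra.ι A (UqGen.Xp i)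
def Xm (i : Fin m) : FA m := FreeAlgebra.ι A (UqGen.Xm i)
end FA

/-- The Cartan integers `(i,j)` of type `A_m`: `2` if `i = j`, `-1` if `|i-j| = 1`,
`0` if `|i-j| ≥ 2`. -/
def cart {m : ℕ} (i j : Fin m) : ℤ :=
  if i = j then 2 else if (i : ℕ) + 1 = j ∨ (j : ℕ) + 1 = i then -1 else 0

/-- The defining relations of `U_q(sl_n)`. -/
inductive uqRel (m : ℕ) : FA m → FA m → Prop
  | KKinv (i : Fin m) : uqRel m (FA.K i * FA.Kinv i) 1
  | KinvK (i : Fin m) : uqRel m (FA.Kinv i * FA.K i) 1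
  | KK (i j : Fin m) : uqRel m (FA.K i * FA.K j) (FA.K j * FA.K i)
  | KXp (i j : Fin m) : uqRel m (FA.K i * FA.Xp j) (qq ^ (cart i j) • (FA.Xp j * FA.K i))
  | KXm (i j : Fin m) : uqRel m (FA.K i * FA.Xm j) (qq ^ (-cart i j) • (FA.Xm j * FA.K i))
  | XpXm (i j : Fin m) :
      uqRel m (FA.Xp i * FA.Xm j - FA.Xm j * FA.Xp i)
        (if i = j then (qq - qq⁻¹)⁻¹ • (FA.K i - FA.Kinv i) else 0)
  | XpXp (i j : Fin m) (h : (i : ℕ) + 2 ≤ j ∨ (j : ℕ) + 2 ≤ i) :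
      uqRel m (FA.Xp i * FA.Xp j) (FA.Xp j * FA.Xp i)
  | XmXm (i j : Fin m) (h : (i : ℕ) + 2 ≤ j ∨ (j : ℕ) + 2 ≤ i) :
      uqRel m (FA.Xm i * FA.Xm j) (FA.Xm j * FA.Xm i)
  | serreP (i j : Fin m) (h : (i : ℕ) + 1 = j ∨ (j : ℕ) + 1 = i) :
      uqRel m (FA.Xp i ^ 2 * FA.Xp j - (qq + qq⁻¹) • (FA.Xp i * FA.Xp j * FA.Xp i)
        + FA.Xp j * FA.Xp i ^ 2) 0
  | serreM (i j : Fin m) (h : (i : ℕ) + 1 = j ∨ (j : ℕ) + 1 = i) :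
      uqRel m (FA.Xm i ^ 2 * FA.Xm j - (qq + qq⁻¹) • (FA.Xm i * FA.Xm j * FA.Xm i)
        + FA.Xm j * FA.Xm i ^ 2) 0

/-- The quantum group `U_q(sl_{m+1})`, presented by generators and relations.
For `U_q(sl_n)` take `m = n - 1`. -/
abbrev Uq (m : ℕ) : Type := RingQuot (uqRel m)

namespace Uq
variable {m : ℕ}
/-- The generator `K_{i+1}` of `U_q(sl_n)`. -/
def K (i : Fin m) : Uq m := RingQuot.mkAlgHom A (uqRel m) (FA.K i)
/-- The generator `K_{i+1}⁻¹` of `U_q(sl_n)`. -/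
def Kinv (i : Fin m) : Uq m := RingQuot.mkAlgHom A (uqRel m) (FA.Kinv i)
/-- The generator `X_{i+1}^+` of `U_q(sl_n)`. -/
def Xp (i : Fin m) : Uq m := RingQuot.mkAlgHom A (uqRel m) (FA.Xp i)
/-- The generator `X_{i+1}^-` of `U_q(sl_n)`. -/
def Xm (i : Fin m) : Uq m := RingQuot.mkAlgHom A (uqRel m) (FA.Xm i)
end Uq
/-! ### The duality maps `d_{a,n}`, triple invariants, and the pivotal elements `τ`. -/

/-- The sum-of-coefficients functional on `V_a^n`. -/
def sumF (n a : ℕ) : V n a →ₗ[A] A where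
  toFun f := ∑ s : BS n a, f s
  map_add' f g := by simp [Finset.sum_add_distrib]
  map_smul' c f := by simp [Finset.mul_sum]

/-- The "trivial" map `V_a^n → (V_c^n)^*`; when `V_a^n` and `V_c^n` are one-dimensional
(`a = 0` or `a = n`, and correspondingly for `c`) it sends the basis vector to the dual
basis vector.  Used for the base cases of `d_{a,n}`. -/
def dtriv (n a c : ℕ) : V n a →ₗ[A] Module.Dual A (V n c) :=
  LinearMap.smulRight (sumF n a) (sumF n c)

/-- The map `d_{a,n} : V_a^n → (V_{n-a}^n)^*`, defined recursively by
`d_{a,n} = i₀ ∘ d_{a-1,n-1} ∘ p₋₁ + (-q)^{-a} i₋₁ ∘ d_{a,n-1} ∘ p₀`, with both base cases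
sending the basis vector to the dual basis vector.  Here `dmap n a c` has target
`(V_c^n)^*`, to be used with `c = n - a`. -/
def dmap : (n a c : ℕ) → (V n a →ₗ[A] Module.Dual A (V n c))
  | 0, a, c => dtriv 0 a c
  | n+1, 0, c => dtriv (n+1) 0 c
  | n+1, a+1, c =>
    if a + 1 = n + 1 then dtriv (n+1) (a+1) c
    else
      match c with
      | 0 => 0
      | c+1 =>
        (pzero n (c+1)).dualMap ∘ₗ (dmap n a (c+1)) ∘ₗ (pminus n a)
        + ((-qq) ^ (a+1))⁻¹ •
            ((pminus n c).dualMap ∘ₗ (dmap n (a+1) c) ∘ₗ (pzero n (a+1)))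

section voutvin

open TensorProduct

/-- First term of the recursion for `v_out`: `(-1)^c q^{b+c} (i₋₁ ⊗ i₀ ⊗ i₀)`. -/
def vterm1 (n a b c : ℕ) (v : V n a ⊗[A] (V n b ⊗[A] V n c)) :
    V (n+1) (a+1) ⊗[A] (V (n+1) b ⊗[A] V (n+1) c) :=
  ((-1 : A)^c * qq^(b+c)) •
    (TensorProduct.map (iminus n a) (TensorProduct.map (izero n b) (izero n c)) v)

/-- Second term of the recursion for `v_out`: `(-1)^a q^c (i₀ ⊗ i₋₁ ⊗ i₀)`. -/
def vterm2 (n a b c : ℕ) (v : V n a ⊗[A] (V n b ⊗[A] V n c)) :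
    V (n+1) a ⊗[A] (V (n+1) (b+1) ⊗[A] V (n+1) c) :=
  ((-1 : A)^a * qq^c) •
    (TensorProduct.map (izero n a) (TensorProduct.map (iminus n b) (izero n c)) v)

/-- Third term of the recursion for `v_out`: `(-1)^b (i₀ ⊗ i₀ ⊗ i₋₁)`. -/
def vterm3 (n a b c : ℕ) (v : V n a ⊗[A] (V n b ⊗[A] V n c)) :
    V (n+1) a ⊗[A] (V (n+1) b ⊗[A] V (n+1) (c+1)) :=
  ((-1 : A)^b) •
    (TensorProduct.map (izero n a) (TensorProduct.map (izero n b) (iminus n c)) v)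

/-- The triple invariant `v_out^n_{a,b,c} ∈ V_a^n ⊗ V_b^n ⊗ V_c^n` (intended for
`a + b + c = n`), defined by the recursion of Definition `defn:trivalent-vertices`,
omitting any term with a negative subscript. -/
def voutE : (n a b c : ℕ) → V n a ⊗[A] (V n b ⊗[A] V n c)
  | 0, _, _, _ => (fun _ => (1:A)) ⊗ₜ[A] ((fun _ => (1:A)) ⊗ₜ[A] (fun _ => (1:A)))
  | n+1, 0, 0, 0 => 0
  | n+1, a+1, 0, 0 => vterm1 n a 0 0 (voutE n a 0 0)
  | n+1, 0, b+1, 0 => vterm2 n 0 b 0 (voutE n 0 b 0)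
  | n+1, 0, 0, c+1 => vterm3 n 0 0 c (voutE n 0 0 c)
  | n+1, a+1, b+1, 0 =>
      vterm1 n a (b+1) 0 (voutE n a (b+1) 0) + vterm2 n (a+1) b 0 (voutE n (a+1) b 0)
  | n+1, a+1, 0, c+1 =>
      vterm1 n a 0 (c+1) (voutE n a 0 (c+1)) + vterm3 n (a+1) 0 c (voutE n (a+1) 0 c)
  | n+1, 0, b+1, c+1 =>
      vterm2 n 0 b (c+1) (voutE n 0 b (c+1)) + vterm3 n 0 (b+1) c (voutE n 0 (b+1) c)
  | n+1, a+1, b+1, c+1 =>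
      vterm1 n a (b+1) (c+1) (voutE n a (b+1) (c+1))
      + vterm2 n (a+1) b (c+1) (voutE n (a+1) b (c+1))
      + vterm3 n (a+1) (b+1) c (voutE n (a+1) (b+1) c)

/-- First term of the recursion for `v_in`: `(-1)^c (…) ∘ (p₋₁ ⊗ p₀ ⊗ p₀)`. -/
def wterm1 (n a b c : ℕ) (φ : V n a ⊗[A] (V n b ⊗[A] V n c) →ₗ[A] A) :
    V (n+1) (a+1) ⊗[A] (V (n+1) b ⊗[A] V (n+1) c) →ₗ[A] A :=
  ((-1 : A)^c) •
    (φ ∘ₗ TensorProduct.map (pminus n a) (TensorProduct.map (pzero n b) (pzero n c)))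

/-- Second term of the recursion for `v_in`: `(-1)^a q^{-a} (…) ∘ (p₀ ⊗ p₋₁ ⊗ p₀)`. -/
def wterm2 (n a b c : ℕ) (φ : V n a ⊗[A] (V n b ⊗[A] V n c) →ₗ[A] A) :
    V (n+1) a ⊗[A] (V (n+1) (b+1) ⊗[A] V (n+1) c) →ₗ[A] A :=
  ((-1 : A)^a * (qq^a)⁻¹) •
    (φ ∘ₗ TensorProduct.map (pzero n a) (TensorProduct.map (pminus n b) (pzero n c)))

/-- Third term of the recursion for `v_in`: `(-1)^b q^{-a-b} (…) ∘ (p₀ ⊗ p₀ ⊗ p₋₁)`. -/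
def wterm3 (n a b c : ℕ) (φ : V n a ⊗[A] (V n b ⊗[A] V n c) →ₗ[A] A) :
    V (n+1) a ⊗[A] (V (n+1) b ⊗[A] V (n+1) (c+1)) →ₗ[A] A :=
  ((-1 : A)^b * (qq^(a+b))⁻¹) •
    (φ ∘ₗ TensorProduct.map (pzero n a) (TensorProduct.map (pzero n b) (pminus n c)))

/-- The triple coinvariant `v_in^n_{a,b,c} : V_a^n ⊗ V_b^n ⊗ V_c^n → 𝔸` (intended for
`a + b + c = n`), defined recursively, omitting any term with a negative subscript. -/
def vinE : (n a b c : ℕ) → (V n a ⊗[A] (V n b ⊗[A] V n c) →ₗ[A] A)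
  | 0, a, b, c =>
      (LinearMap.mul' A A) ∘ₗ
        TensorProduct.map (sumF 0 a)
          ((LinearMap.mul' A A) ∘ₗ TensorProduct.map (sumF 0 b) (sumF 0 c))
  | n+1, 0, 0, 0 => 0
  | n+1, a+1, 0, 0 => wterm1 n a 0 0 (vinE n a 0 0)
  | n+1, 0, b+1, 0 => wterm2 n 0 b 0 (vinE n 0 b 0)
  | n+1, 0, 0, c+1 => wterm3 n 0 0 c (vinE n 0 0 c)
  | n+1, a+1, b+1, 0 =>
      wterm1 n a (b+1) 0 (vinE n a (b+1) 0) + wterm2 n (a+1) b 0 (vinE n (a+1) b 0)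
  | n+1, a+1, 0, c+1 =>
      wterm1 n a 0 (c+1) (vinE n a 0 (c+1)) + wterm3 n (a+1) 0 c (vinE n (a+1) 0 c)
  | n+1, 0, b+1, c+1 =>
      wterm2 n 0 b (c+1) (vinE n 0 b (c+1)) + wterm3 n 0 (b+1) c (vinE n 0 (b+1) c)
  | n+1, a+1, b+1, c+1 =>
      wterm1 n a (b+1) (c+1) (vinE n a (b+1) (c+1))
      + wterm2 n (a+1) b (c+1) (vinE n (a+1) b (c+1))
      + wterm3 n (a+1) (b+1) c (vinE n (a+1) (b+1) c)

end voutvin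

/-- The operator `∏_{j=1}^{n-1} K_j^j` on `V_a^n`. -/
def kjOp (n a : ℕ) : Module.End A (V n a) :=
  (List.ofFn fun i : Fin (n-1) => (KOp n a ((i : ℕ)+1)) ^ ((i : ℕ)+1)).prod

/-- The pivotal operator `τ_n = ∏_{j=1}^{n-1} K_j^{j(n-j)}` on `V_a^n`. -/
def tauOp (n a : ℕ) : Module.End A (V n a) :=
  (List.ofFn fun i : Fin (n-1) => (KOp n a ((i : ℕ)+1)) ^ (((i : ℕ)+1) * (n - ((i : ℕ)+1)))).prod

/-- The inverse pivotal operator `τ_n⁻¹ = ∏_{j=1}^{n-1} K_j^{-j(n-j)}` on `V_a^n`. -/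
def tauinvOp (n a : ℕ) : Module.End A (V n a) :=
  (List.ofFn fun i : Fin (n-1) => (KinvOp n a ((i : ℕ)+1)) ^ (((i : ℕ)+1) * (n - ((i : ℕ)+1)))).prod

/-- The element `τ_n = ∏_{j=1}^{n-1} K_j^{j(n-j)} ∈ U_q(sl_n)`. -/
def tauU (n : ℕ) : Uq (n-1) :=
  (List.ofFn fun i : Fin (n-1) => (Uq.K i) ^ (((i : ℕ)+1) * (n - ((i : ℕ)+1)))).prod

/-- The Cartan integers for literal subscripts `i, j ∈ {1, …, n-1}`. -/
def cartN (i j : ℕ) : ℤ :=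
  if i = j then 2 else if i + 1 = j ∨ j + 1 = i then -1 else 0

/-- The map `ι' : V_a^n → V_1^n ⊗ V_{a-1}^n`,
`ι' = (pairing_{V_{n-a}} ⊗ Id ⊗ Id) ∘ (d_{a,n} ⊗ v_out^n_{n-a,1,a-1})`. -/
def iotaP (n a : ℕ) : V n a →ₗ[A] (V n 1 ⊗[A] V n (a-1)) :=
  (TensorProduct.lid A (V n 1 ⊗[A] V n (a-1))).toLinearMap
  ∘ₗ TensorProduct.map (contractLeft A (V n (n-a))) LinearMap.id
  ∘ₗ (TensorProduct.assoc A (Module.Dual A (V n (n-a))) (V n (n-a))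
        (V n 1 ⊗[A] V n (a-1))).symm.toLinearMap
  ∘ₗ (TensorProduct.mk A (Module.Dual A (V n (n-a)))
        (V n (n-a) ⊗[A] (V n 1 ⊗[A] V n (a-1)))).flip (voutE n (n-a) 1 (a-1))
  ∘ₗ dmap n a (n-a)

/-- The map `π' : V_1^n ⊗ V_{a-1}^n → V_a^n`,
`π' = (v_in^n_{1,a-1,n-a} ⊗ d_{a,n}⁻¹) ∘ (Id ⊗ Id ⊗ copairing_{V_{n-a}})`, where `dinv` is
the inverse of `d_{a,n}` and the copairing sends `1` to the canonical element
`∑ e_s ⊗ e_s^*`. -/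
def piP (n a : ℕ) (dinv : Module.Dual A (V n (n-a)) →ₗ[A] V n a) :
    (V n 1 ⊗[A] V n (a-1)) →ₗ[A] V n a :=
  (TensorProduct.lid A (V n a)).toLinearMap
  ∘ₗ TensorProduct.map (vinE n 1 (a-1) (n-a)) dinv
  ∘ₗ TensorProduct.map
      (TensorProduct.assoc A (V n 1) (V n (a-1)) (V n (n-a))).toLinearMap LinearMap.id
  ∘ₗ (TensorProduct.assoc A (V n 1 ⊗[A] V n (a-1)) (V n (n-a))
        (Module.Dual A (V n (n-a)))).symm.toLinearMap
  ∘ₗ (TensorProduct.mk A (V n 1 ⊗[A] V n (a-1))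
        (V n (n-a) ⊗[A] Module.Dual A (V n (n-a)))).flip
      ((coevaluation A (V n (n-a))) 1)

/-! ### Auxiliary development for statement17 -/

section Aux

open TensorProduct LinearMap

/-- The quantum integer `[k] = (∑_{j<k} q^{2j}) / q^{k-1}`. -/
def qint (k : ℕ) : A := (∑ j ∈ Finset.range k, qq ^ (2 * j)) * (qq ^ (k - 1))⁻¹

lemma qq_ne_zero : (qq : A) ≠ 0 := RatFunc.X_ne_zero

lemma qint_one : qint 1 = 1 := by
  simp [qint]

lemma qint_succ (k : ℕ) : qint (k + 1) = qq ^ k + qq⁻¹ * qint k := by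
  cases k with
  | zero => simp [qint]
  | succ m =>
    rw [qint, qint]
    have h1 : (qq : A) ^ (m + 1 - 1) = qq ^ m := by norm_num
    have h2 : (qq : A) ^ (m + 1 + 1 - 1) = qq ^ (m + 1) := by norm_num
    rw [h1, h2, Finset.sum_range_succ _ (m+1)]
    have hq : (qq : A) ≠ 0 := qq_ne_zero
    field_simp
    ring

lemma qint_ne_zero {k : ℕ} (hk : 1 ≤ k) : qint k ≠ 0 := by
  apply mul_ne_zero
  · have : (∑ j ∈ Finset.range k, qq ^ (2 * j))
        = algebraMap (Polynomial ℚ) A (∑ j ∈ Finset.range k, Polynomial.X ^ (2 * j)) := by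
      rw [map_sum]
      refine Finset.sum_congr rfl fun j _ => ?_
      rw [map_pow, RatFunc.algebraMap_X, qq]
    rw [this]
    apply RatFunc.algebraMap_ne_zero
    intro h
    have := congrArg (Polynomial.eval (1 : ℚ)) h
    simp only [Polynomial.eval_finset_sum, Polynomial.eval_pow, Polynomial.eval_one,
      Polynomial.eval_X, one_pow, Finset.sum_const, Finset.card_range, nsmul_eq_mul,
      mul_one, Polynomial.eval_zero] at this
    rw [show ((k:ℚ) = 0) ↔ (k = 0) from by exact_mod_cast Iff.rfl] at this
    omega
  · exact inv_ne_zero (pow_ne_zero _ qq_ne_zero)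

end Aux

section Aux2

open TensorProduct LinearMap

lemma pminus_comp_iminus (n a : ℕ) : pminus n a ∘ₗ iminus n a = LinearMap.id := by
  apply LinearMap.ext; intro f; funext t
  have hn : n ∉ t.1 := fun hm => by have := t.2.1 hm; simp at this
  show (iminus n a f) ⟨insert n t.1, _⟩ = f t
  rw [iminus]
  simp only [LinearMap.coe_mk, AddHom.coe_mk]
  rw [dif_pos (Finset.mem_insert_self n t.1)]
  exact congrArg f (Subtype.ext (Finset.erase_insert hn))

lemma pzero_comp_izero (n a : ℕ) : pzero n a ∘ₗ izero n a = LinearMap.id := by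
  apply LinearMap.ext; intro f; funext t
  have hn : n ∉ t.1 := fun hm => by have := t.2.1 hm; simp at this
  show (izero n a f) ⟨t.1, _⟩ = f t
  rw [izero]
  simp only [LinearMap.coe_mk, AddHom.coe_mk]
  rw [dif_neg hn]

lemma pminus_comp_izero (n a : ℕ) : pminus n a ∘ₗ izero n (a+1) = 0 := by
  apply LinearMap.ext; intro f; funext t
  show (izero n (a+1) f) ⟨insert n t.1, _⟩ = 0
  rw [izero]
  simp only [LinearMap.coe_mk, AddHom.coe_mk]
  rw [dif_pos (Finset.mem_insert_self n t.1)]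

lemma pzero_comp_iminus (n a : ℕ) : pzero n (a+1) ∘ₗ iminus n a = 0 := by
  apply LinearMap.ext; intro f; funext t
  have hn : n ∉ t.1 := fun hm => by have := t.2.1 hm; simp at this
  show (iminus n a f) ⟨t.1, _⟩ = 0
  rw [iminus]
  simp only [LinearMap.coe_mk, AddHom.coe_mk]
  rw [dif_neg hn]

lemma decomp_id (n a : ℕ) :
    iminus n a ∘ₗ pminus n a + izero n (a+1) ∘ₗ pzero n (a+1)
      = (LinearMap.id : V (n+1) (a+1) →ₗ[A] V (n+1) (a+1)) := by
  apply LinearMap.ext; intro f; funext s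
  show (iminus n a (pminus n a f)) s + (izero n (a+1) (pzero n (a+1) f)) s = f s
  rw [iminus, izero]
  simp only [LinearMap.coe_mk, AddHom.coe_mk]
  by_cases h : n ∈ s.1
  · rw [dif_pos h, dif_pos h, pminus]
    simp only [LinearMap.coe_mk, AddHom.coe_mk]
    rw [add_zero]
    exact congrArg f (Subtype.ext (Finset.insert_erase h))
  · rw [dif_neg h, dif_neg h, pzero]
    simp only [LinearMap.coe_mk, AddHom.coe_mk, zero_add]

lemma izero_comp_pzero_zero (n : ℕ) :
    izero n 0 ∘ₗ pzero n 0 = (LinearMap.id : V (n+1) 0 →ₗ[A] V (n+1) 0) := by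
  apply LinearMap.ext; intro f; funext s
  have h : n ∉ s.1 := by
    have := Finset.card_eq_zero.mp s.2.2
    simp [this]
  show (izero n 0 (pzero n 0 f)) s = f s
  rw [izero]
  simp only [LinearMap.coe_mk, AddHom.coe_mk]
  rw [dif_neg h, pzero]
  simp only [LinearMap.coe_mk, AddHom.coe_mk]

lemma iminus_comp_pminus_full (n : ℕ) :
    iminus n n ∘ₗ pminus n n = (LinearMap.id : V (n+1) (n+1) →ₗ[A] V (n+1) (n+1)) := by
  apply LinearMap.ext; intro f; funext s
  have hs : s.1 = Finset.range (n+1) := Finset.eq_of_subset_of_card_le s.2.1 (by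
    rw [s.2.2, Finset.card_range])
  have h : n ∈ s.1 := by rw [hs]; simp
  show (iminus n n (pminus n n f)) s = f s
  rw [iminus]
  simp only [LinearMap.coe_mk, AddHom.coe_mk]
  rw [dif_pos h, pminus]
  simp only [LinearMap.coe_mk, AddHom.coe_mk]
  exact congrArg f (Subtype.ext (Finset.insert_erase h))

end Aux2

section MkOp

open TensorProduct LinearMap

variable {M₁ M₂ M₃ M₄ N₁ N₂ N₃ P₂ P₃ P₄ : Type}
variable [AddCommGroup M₁] [AddCommGroup M₂] [AddCommGroup M₃] [AddCommGroup M₄]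
variable [AddCommGroup N₁] [AddCommGroup N₂] [AddCommGroup N₃]
variable [AddCommGroup P₂] [AddCommGroup P₃] [AddCommGroup P₄]
variable [Module A M₁] [Module A M₂] [Module A M₃] [Module A M₄]
variable [Module A N₁] [Module A N₂] [Module A N₃]
variable [Module A P₂] [Module A P₃] [Module A P₄]

/-- The contraction operator: from `φ : M₂ ⊗ (M₃ ⊗ M₄) → A` and
`v ∈ M₁ ⊗ (M₂ ⊗ M₃)`, produce the map `M₄ → M₁`, `e ↦ ∑ φ(y⊗(z⊗e)) • x`. -/
def mkOp (φ : M₂ ⊗[A] (M₃ ⊗[A] M₄) →ₗ[A] A) :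
    M₁ ⊗[A] (M₂ ⊗[A] M₃) →ₗ[A] (M₄ →ₗ[A] M₁) :=
  dualTensorHom A M₄ M₁
  ∘ₗ (TensorProduct.comm A M₁ (Module.Dual A M₄)).toLinearMap
  ∘ₗ TensorProduct.map LinearMap.id
      (TensorProduct.curry (φ ∘ₗ (TensorProduct.assoc A M₂ M₃ M₄).toLinearMap))

@[simp] lemma mkOp_tmul (φ : M₂ ⊗[A] (M₃ ⊗[A] M₄) →ₗ[A] A)
    (x : M₁) (y : M₂) (z : M₃) (e : M₄) :
    mkOp φ (x ⊗ₜ[A] (y ⊗ₜ[A] z)) e = φ (y ⊗ₜ[A] (z ⊗ₜ[A] e)) • x := by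
  simp [mkOp]

lemma mkOp_smul (c : A) (φ : M₂ ⊗[A] (M₃ ⊗[A] M₄) →ₗ[A] A)
    (v : M₁ ⊗[A] (M₂ ⊗[A] M₃)) : mkOp (c • φ) v = c • mkOp φ v := by
  induction v using TensorProduct.induction_on with
  | zero => simp
  | tmul x t =>
    induction t using TensorProduct.induction_on with
    | zero => simp [tmul_zero]
    | tmul y z => ext e; simp [smul_smul]
    | add t₁ t₂ h₁ h₂ => rw [tmul_add, map_add, map_add, h₁, h₂, smul_add]
  | add v₁ v₂ h₁ h₂ => rw [map_add, map_add, h₁, h₂, smul_add]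

lemma mkOp_addφ (φ ψ : M₂ ⊗[A] (M₃ ⊗[A] M₄) →ₗ[A] A)
    (v : M₁ ⊗[A] (M₂ ⊗[A] M₃)) : mkOp (φ + ψ) v = mkOp φ v + mkOp ψ v := by
  induction v using TensorProduct.induction_on with
  | zero => simp
  | tmul x t =>
    induction t using TensorProduct.induction_on with
    | zero => simp [tmul_zero]
    | tmul y z => ext e; simp [add_smul]
    | add t₁ t₂ h₁ h₂ =>
      rw [tmul_add, map_add, map_add, map_add, h₁, h₂]
      abel
  | add v₁ v₂ h₁ h₂ =>
    rw [map_add, map_add, map_add, h₁, h₂]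
    abel

lemma mkOp_nat (φ : P₂ ⊗[A] (P₃ ⊗[A] P₄) →ₗ[A] A)
    (p₁ : M₂ →ₗ[A] P₂) (p₂ : M₃ →ₗ[A] P₃) (p₃ : M₄ →ₗ[A] P₄)
    (i₁ : N₁ →ₗ[A] M₁) (i₂ : N₂ →ₗ[A] M₂) (i₃ : N₃ →ₗ[A] M₃)
    (v : N₁ ⊗[A] (N₂ ⊗[A] N₃)) :
    mkOp (φ ∘ₗ TensorProduct.map p₁ (TensorProduct.map p₂ p₃))
        (TensorProduct.map i₁ (TensorProduct.map i₂ i₃) v)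
      = i₁ ∘ₗ (mkOp (φ ∘ₗ TensorProduct.map (p₁ ∘ₗ i₂)
          (TensorProduct.map (p₂ ∘ₗ i₃) LinearMap.id)) v) ∘ₗ p₃ := by
  induction v using TensorProduct.induction_on with
  | zero => simp
  | tmul x t =>
    induction t using TensorProduct.induction_on with
    | zero => simp [tmul_zero]
    | tmul y z => ext e; simp
    | add t₁ t₂ h₁ h₂ =>
      simp only [tmul_add, map_add, h₁, h₂]
      ext e; simp
  | add v₁ v₂ h₁ h₂ =>
    simp only [map_add, h₁, h₂]
    ext e; simp

lemma mkOp_zero_left (φ : P₂ ⊗[A] (P₃ ⊗[A] P₄) →ₗ[A] A)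
    (g : M₃ ⊗[A] M₄ →ₗ[A] P₃ ⊗[A] P₄) (v : M₁ ⊗[A] (M₂ ⊗[A] M₃)) :
    mkOp (φ ∘ₗ TensorProduct.map (0 : M₂ →ₗ[A] P₂) g) v = 0 := by
  induction v using TensorProduct.induction_on with
  | zero => simp
  | tmul x t =>
    induction t using TensorProduct.induction_on with
    | zero => simp [tmul_zero]
    | tmul y z => ext e; simp
    | add t₁ t₂ h₁ h₂ => rw [tmul_add, map_add, h₁, h₂, add_zero]
  | add v₁ v₂ h₁ h₂ => rw [map_add, h₁, h₂, add_zero]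

lemma mkOp_zero_mid (φ : P₂ ⊗[A] (P₃ ⊗[A] P₄) →ₗ[A] A)
    (p₁ : M₂ →ₗ[A] P₂) (p₃ : M₄ →ₗ[A] P₄) (v : M₁ ⊗[A] (M₂ ⊗[A] M₃)) :
    mkOp (φ ∘ₗ TensorProduct.map p₁ (TensorProduct.map (0 : M₃ →ₗ[A] P₃) p₃)) v = 0 := by
  induction v using TensorProduct.induction_on with
  | zero => simp
  | tmul x t =>
    induction t using TensorProduct.induction_on with
    | zero => simp [tmul_zero]
    | tmul y z => ext e; simp
    | add t₁ t₂ h₁ h₂ => rw [tmul_add, map_add, h₁, h₂, add_zero]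
  | add v₁ v₂ h₁ h₂ => rw [map_add, h₁, h₂, add_zero]

lemma mkOp_term (cφ cv : A) (φ : P₂ ⊗[A] (P₃ ⊗[A] P₄) →ₗ[A] A)
    (p₁ : M₂ →ₗ[A] P₂) (p₂ : M₃ →ₗ[A] P₃) (p₃ : M₄ →ₗ[A] P₄)
    (i₁ : N₁ →ₗ[A] M₁) (i₂ : N₂ →ₗ[A] M₂) (i₃ : N₃ →ₗ[A] M₃)
    (v : N₁ ⊗[A] (N₂ ⊗[A] N₃)) :
    mkOp (cφ • (φ ∘ₗ TensorProduct.map p₁ (TensorProduct.map p₂ p₃)))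
        (cv • TensorProduct.map i₁ (TensorProduct.map i₂ i₃) v)
      = (cφ * cv) • (i₁ ∘ₗ (mkOp (φ ∘ₗ TensorProduct.map (p₁ ∘ₗ i₂)
          (TensorProduct.map (p₂ ∘ₗ i₃) LinearMap.id)) v) ∘ₗ p₃) := by
  rw [map_smul, mkOp_smul, mkOp_nat, smul_smul, mul_comm cv cφ]

end MkOp

section Key

open TensorProduct LinearMap

instance uniqueBS (n : ℕ) : Unique (BS n 0) where
  default := ⟨∅, by simp⟩
  uniq s := Subtype.ext (Finset.card_eq_zero.mp s.2.2)

lemma mkOp_base :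
    mkOp (vinE 0 0 0 0) (voutE 0 0 0 0) = (LinearMap.id : V 0 0 →ₗ[A] V 0 0) := by
  apply LinearMap.ext; intro e
  have h0 : voutE 0 0 0 0
      = (fun _ => (1:A)) ⊗ₜ[A] ((fun _ => (1:A)) ⊗ₜ[A] (fun _ => (1:A))) := rfl
  rw [h0, mkOp_tmul]
  have h1 : vinE 0 0 0 0 ((fun _ => (1:A)) ⊗ₜ[A] ((fun _ => (1:A)) ⊗ₜ[A] e))
      = e default := by
    show (LinearMap.mul' A A)
      ((TensorProduct.map (sumF 0 0)
        ((LinearMap.mul' A A) ∘ₗ TensorProduct.map (sumF 0 0) (sumF 0 0)))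
        ((fun _ => (1:A)) ⊗ₜ[A] ((fun _ => (1:A)) ⊗ₜ[A] e))) = e default
    rw [TensorProduct.map_tmul]
    simp only [LinearMap.coe_comp, Function.comp_apply, TensorProduct.map_tmul,
      LinearMap.mul'_apply, sumF, LinearMap.coe_mk, AddHom.coe_mk]
    simp
  rw [h1]
  funext s
  show e default * 1 = e s
  rw [mul_one, Unique.eq_default s]

lemma keyE : ∀ (n Aa C : ℕ), Aa + C = n →
    mkOp (vinE n 0 C Aa) (voutE n Aa 0 C) = LinearMap.id := by
  intro n
  induction n with
  | zero =>
    intro Aa C h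
    obtain rfl : Aa = 0 := by omega
    obtain rfl : C = 0 := by omega
    exact mkOp_base
  | succ n ih =>
    intro Aa C h
    rcases Aa with _ | Aa
    · rcases C with _ | C
      · omega
      · have hv : voutE (n+1) 0 0 (C+1) = vterm3 n 0 0 C (voutE n 0 0 C) := rfl
        have hw : vinE (n+1) 0 (C+1) 0 = wterm2 n 0 C 0 (vinE n 0 C 0) := rfl
        rw [hv, hw, wterm2, vterm3, mkOp_term]
        simp only [pzero_comp_izero, pminus_comp_iminus, TensorProduct.map_id,
          LinearMap.comp_id]
        rw [ih 0 C (by omega), LinearMap.id_comp, izero_comp_pzero_zero]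
        norm_num
    · rcases C with _ | C
      · have hv : voutE (n+1) (Aa+1) 0 0 = vterm1 n Aa 0 0 (voutE n Aa 0 0) := rfl
        have hw : vinE (n+1) 0 0 (Aa+1) = wterm3 n 0 0 Aa (vinE n 0 0 Aa) := rfl
        rw [hv, hw, wterm3, vterm1, mkOp_term]
        simp only [pzero_comp_izero, TensorProduct.map_id, LinearMap.comp_id]
        rw [ih Aa 0 (by omega), LinearMap.id_comp]
        obtain rfl : Aa = n := by omega
        rw [iminus_comp_pminus_full]
        norm_num
      · have hv : voutE (n+1) (Aa+1) 0 (C+1)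
            = vterm1 n Aa 0 (C+1) (voutE n Aa 0 (C+1))
              + vterm3 n (Aa+1) 0 C (voutE n (Aa+1) 0 C) := rfl
        have hw : vinE (n+1) 0 (C+1) (Aa+1)
            = wterm2 n 0 C (Aa+1) (vinE n 0 C (Aa+1))
              + wterm3 n 0 (C+1) Aa (vinE n 0 (C+1) Aa) := rfl
        rw [hv, hw, vterm1, vterm3, wterm2, wterm3, mkOp_addφ, map_add, map_add,
          mkOp_term, mkOp_term, mkOp_term, mkOp_term]
        simp only [pzero_comp_izero, pminus_comp_izero, pminus_comp_iminus,
          pzero_comp_iminus, TensorProduct.map_id, LinearMap.comp_id,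
          mkOp_zero_mid, mkOp_zero_left, LinearMap.comp_zero, LinearMap.zero_comp,
          smul_zero, add_zero, zero_add]
        rw [ih Aa (C+1) (by omega), ih (Aa+1) C (by omega), LinearMap.id_comp,
          LinearMap.id_comp, ← decomp_id n Aa]
        have h1 : ((-1:A)^(C+1) * (qq^(C+1))⁻¹) * ((-1:A)^(C+1) * qq^(C+1)) = 1 := by
          have hq : (qq:A) ≠ 0 := qq_ne_zero
          field_simp
          rw [← pow_mul, pow_mul']
          norm_num
        have h2 : ((-1:A)^0 * ((qq:A)^(0:ℕ))⁻¹) * ((-1:A)^0) = 1 := by norm_num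
        rw [h1, h2, one_smul, one_smul]
        exact add_comm _ _

end Key

section KeyN

open TensorProduct LinearMap

lemma keyN : ∀ (n Aa C : ℕ), Aa + 1 + C = n →
    mkOp (vinE n 1 C Aa) (voutE n Aa 1 C)
      = qint (C+1) • (LinearMap.id : V n Aa →ₗ[A] V n Aa) := by
  intro n
  induction n with
  | zero => intro Aa C h; omega
  | succ n ih =>
    intro Aa C h
    rcases Aa with _ | Aa
    · rcases C with _ | C
      · obtain rfl : n = 0 := by omega
        have hv : voutE 1 0 1 0 = vterm2 0 0 0 0 (voutE 0 0 0 0) := rfl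
        have hw : vinE 1 1 0 0 = wterm1 0 0 0 0 (vinE 0 0 0 0) := rfl
        rw [hv, hw, vterm2, wterm1, mkOp_term]
        simp only [pminus_comp_iminus, pzero_comp_izero, TensorProduct.map_id,
          LinearMap.comp_id]
        rw [mkOp_base, LinearMap.id_comp, izero_comp_pzero_zero, qint_one]
        norm_num
      · have hv : voutE (n+1) 0 1 (C+1)
            = vterm2 n 0 0 (C+1) (voutE n 0 0 (C+1))
              + vterm3 n 0 1 C (voutE n 0 1 C) := rfl
        have hw : vinE (n+1) 1 (C+1) 0
            = wterm1 n 0 (C+1) 0 (vinE n 0 (C+1) 0)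
              + wterm2 n 1 C 0 (vinE n 1 C 0) := rfl
        rw [hv, hw, vterm2, vterm3, wterm1, wterm2, mkOp_addφ, map_add, map_add,
          mkOp_term, mkOp_term, mkOp_term, mkOp_term]
        simp only [pminus_comp_iminus, pzero_comp_izero, pminus_comp_izero,
          pzero_comp_iminus, TensorProduct.map_id, LinearMap.comp_id,
          mkOp_zero_mid, mkOp_zero_left, LinearMap.comp_zero, LinearMap.zero_comp,
          smul_zero, add_zero, zero_add]
        rw [keyE n 0 (C+1) (by omega), ih 0 C (by omega), LinearMap.id_comp]
        simp only [LinearMap.smul_comp, LinearMap.comp_smul, LinearMap.id_comp,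
          izero_comp_pzero_zero, smul_smul]
        have e1 : (-1:A)^0 * ((-1:A)^0 * qq^(C+1)) = qq^(C+1) := by norm_num
        have e2 : ((-1:A)^1 * ((qq:A)^1)⁻¹ * (-1:A)^1) = qq⁻¹ := by
          rw [pow_one, pow_one]; ring
        rw [e1, e2, ← add_smul, ← qint_succ]
    · rcases C with _ | C
      · have hv : voutE (n+1) (Aa+1) 1 0
            = vterm1 n Aa 1 0 (voutE n Aa 1 0)
              + vterm2 n (Aa+1) 0 0 (voutE n (Aa+1) 0 0) := rfl
        have hw : vinE (n+1) 1 0 (Aa+1)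
            = wterm1 n 0 0 (Aa+1) (vinE n 0 0 (Aa+1))
              + wterm3 n 1 0 Aa (vinE n 1 0 Aa) := rfl
        rw [hv, hw, vterm1, vterm2, wterm1, wterm3, mkOp_addφ, map_add, map_add,
          mkOp_term, mkOp_term, mkOp_term, mkOp_term]
        simp only [pminus_comp_iminus, pzero_comp_izero, pminus_comp_izero,
          pzero_comp_iminus, TensorProduct.map_id, LinearMap.comp_id,
          mkOp_zero_mid, mkOp_zero_left, LinearMap.comp_zero, LinearMap.zero_comp,
          smul_zero, add_zero, zero_add]
        rw [keyE n (Aa+1) 0 (by omega), ih Aa 0 (by omega), LinearMap.id_comp, qint_one]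
        simp only [one_smul, LinearMap.id_comp]
        have e1 : (-1:A)^(Aa+1) * ((-1:A)^(Aa+1) * qq^0) = 1 := by
          rw [← mul_assoc, ← mul_pow]; norm_num
        have e2 : (-1:A)^0 * ((qq:A)^1)⁻¹ * ((-1:A)^0 * qq^1) = 1 := by
          have hq : (qq:A) ≠ 0 := qq_ne_zero
          field_simp
        rw [e1, e2, one_smul, one_smul, ← decomp_id n Aa]
        exact add_comm _ _
      · have hv : voutE (n+1) (Aa+1) 1 (C+1)
            = vterm1 n Aa 1 (C+1) (voutE n Aa 1 (C+1))
              + vterm2 n (Aa+1) 0 (C+1) (voutE n (Aa+1) 0 (C+1))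
              + vterm3 n (Aa+1) 1 C (voutE n (Aa+1) 1 C) := rfl
        have hw : vinE (n+1) 1 (C+1) (Aa+1)
            = wterm1 n 0 (C+1) (Aa+1) (vinE n 0 (C+1) (Aa+1))
              + wterm2 n 1 C (Aa+1) (vinE n 1 C (Aa+1))
              + wterm3 n 1 (C+1) Aa (vinE n 1 (C+1) Aa) := rfl
        rw [hv, hw, vterm1, vterm2, vterm3, wterm1, wterm2, wterm3,
          mkOp_addφ, mkOp_addφ, map_add, map_add, map_add, map_add, map_add, map_add,
          mkOp_term, mkOp_term, mkOp_term, mkOp_term, mkOp_term, mkOp_term,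
          mkOp_term, mkOp_term, mkOp_term]
        simp only [pminus_comp_iminus, pzero_comp_izero, pminus_comp_izero,
          pzero_comp_iminus, TensorProduct.map_id, LinearMap.comp_id,
          mkOp_zero_mid, mkOp_zero_left, LinearMap.comp_zero, LinearMap.zero_comp,
          smul_zero, add_zero, zero_add]
        rw [keyE n (Aa+1) (C+1) (by omega), ih (Aa+1) C (by omega),
          ih Aa (C+1) (by omega), LinearMap.id_comp]
        simp only [LinearMap.smul_comp, LinearMap.comp_smul, LinearMap.id_comp, smul_smul]
        have hq : (qq:A) ≠ 0 := qq_ne_zero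
        have e1 : (-1:A)^(Aa+1) * ((-1:A)^(Aa+1) * qq^(C+1)) = qq^(C+1) := by
          rw [← mul_assoc, ← mul_pow]; norm_num
        have e2 : ((-1:A)^1 * ((qq:A)^1)⁻¹ * (-1:A)^1) = qq⁻¹ := by
          rw [pow_one, pow_one]; ring
        have e3 : (-1:A)^(C+1) * ((qq:A)^(1+(C+1)))⁻¹ * ((-1:A)^(C+1) * qq^(1+(C+1))) = 1 := by
          field_simp
          rw [← pow_mul, pow_mul']; norm_num
        rw [e1, e2, e3, one_mul, ← add_smul, ← qint_succ, ← decomp_id n Aa, smul_add]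
        exact add_comm _ _

end KeyN

section Final

open TensorProduct LinearMap

lemma pair_key {M₁ M₂ M₃ M₄ : Type}
    [AddCommGroup M₁] [AddCommGroup M₂] [AddCommGroup M₃] [AddCommGroup M₄]
    [Module A M₁] [Module A M₂] [Module A M₃] [Module A M₄]
    (f : Module.Dual A M₁) (K : M₁ ⊗[A] (M₂ ⊗[A] M₃))
    (φ : M₂ ⊗[A] (M₃ ⊗[A] M₄) →ₗ[A] A) (e : M₄) :
    φ ((TensorProduct.assoc A M₂ M₃ M₄)
        (((TensorProduct.lid A (M₂ ⊗[A] M₃))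
          ((TensorProduct.map (contractLeft A M₁) LinearMap.id)
            ((TensorProduct.assoc A (Module.Dual A M₁) M₁ (M₂ ⊗[A] M₃)).symm
              (f ⊗ₜ[A] K)))) ⊗ₜ[A] e))
      = f (mkOp φ K e) := by
  induction K using TensorProduct.induction_on with
  | zero => simp
  | tmul x t =>
    induction t using TensorProduct.induction_on with
    | zero => simp [tmul_zero]
    | tmul y z =>
      simp only [assoc_symm_tmul, map_tmul, contractLeft_apply, lid_tmul,
        LinearMap.id_coe, id_eq, smul_tmul', assoc_tmul, map_smul, mkOp_tmul,
        smul_eq_mul, LinearMap.map_smul]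
      rw [← smul_tmul', map_smul, smul_eq_mul, mul_comm]
    | add t₁ t₂ h₁ h₂ =>
      simp only [tmul_add, map_add, add_tmul, h₁, h₂, LinearMap.add_apply]
  | add v₁ v₂ h₁ h₂ =>
    simp only [tmul_add, map_add, add_tmul, h₁, h₂, LinearMap.add_apply]

theorem statement17' (n a : ℕ) (hn : 2 ≤ n) (ha1 : 1 ≤ a) (ha2 : a ≤ n - 1)
    (dinv : Module.Dual A (V n (n-a)) →ₗ[A] V n a)
    (hd1 : dinv ∘ₗ dmap n a (n-a) = LinearMap.id)
    (hd2 : dmap n a (n-a) ∘ₗ dinv = LinearMap.id) :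
    ∃ c : A, c ≠ 0 ∧
      piP n a dinv ∘ₗ iotaP n a = c • (LinearMap.id : V n a →ₗ[A] V n a) := by
  refine ⟨qint a, qint_ne_zero ha1, ?_⟩
  apply LinearMap.ext; intro v
  have hA : (n - a) + 1 + (a - 1) = n := by omega
  have hkey := keyN n (n-a) (a-1) hA
  have ha' : a - 1 + 1 = a := by omega
  rw [ha'] at hkey
  rw [LinearMap.comp_apply, LinearMap.smul_apply, LinearMap.id_apply]
  rw [piP, iotaP]
  simp only [LinearMap.comp_apply, LinearEquiv.coe_coe, LinearMap.flip_apply,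
    TensorProduct.mk_apply, coevaluation_apply_one]
  rw [TensorProduct.tmul_sum, map_sum, map_sum, map_sum, map_sum]
  simp only [assoc_symm_tmul, map_tmul, lid_tmul, LinearMap.id_coe, id_eq,
    LinearEquiv.coe_coe]
  simp only [pair_key ((dmap n a (n-a)) v) (voutE n (n-a) 1 (a-1)) (vinE n 1 (a-1) (n-a))]
  rw [hkey]
  simp only [LinearMap.smul_apply, LinearMap.id_apply, LinearMap.map_smul,
    smul_eq_mul, mul_smul]
  rw [← Finset.smul_sum]
  congr 1
  have : ∀ i, (dmap n a (n-a) v) ((Module.Basis.ofVectorSpace A (V n (n-a))) i)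
        • dinv ((Module.Basis.ofVectorSpace A (V n (n-a))).coord i)
      = dinv ((dmap n a (n-a) v) ((Module.Basis.ofVectorSpace A (V n (n-a))) i)
        • (Module.Basis.ofVectorSpace A (V n (n-a))).coord i) := fun i => (map_smul dinv _ _).symm
  rw [Finset.sum_congr rfl (fun i _ => this i), ← map_sum,
    Module.Basis.sum_dual_apply_smul_coord]
  simpa using LinearMap.congr_fun hd1 v

end Final


/-- for every `n ≥ 2` and `1 ≤ a ≤ n-1`, the composite `π' ∘ ι'` is a
nonzero `𝔸`-scalar multiple of the identity of `V_a^n`. -/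
theorem statement17 (n a : ℕ) (hn : 2 ≤ n) (ha1 : 1 ≤ a) (ha2 : a ≤ n - 1)
    (dinv : Module.Dual A (V n (n-a)) →ₗ[A] V n a)
    (hd1 : dinv ∘ₗ dmap n a (n-a) = LinearMap.id)
    (hd2 : dmap n a (n-a) ∘ₗ dinv = LinearMap.id) :
    ∃ c : A, c ≠ 0 ∧
      piP n a dinv ∘ₗ iotaP n a = c • (LinearMap.id : V n a →ₗ[A] V n a) := by
  exact statement17' n a hn ha1 ha2 dinv hd1 hd2

end
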